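/- arXiv:math/0502065 — 3 statements merged into one kernel-verified Lean document; each statement's English description precedes it below -/
import Mathlib

section
/- For planar binary trees T¹ of degree n₁ and T² of degree n₂ with n₁ + n₂ = n, the map (S¹, S²) ↦ S¹\S² is an order isomorphism (in particular a bijection) from the product of upper intervals [T¹, 1̂] × [T², 1̂] in the Tamari posets of degrees n₁ and n₂ onto the interval [T¹\T², 1̂] in the Tamari poset of degree n, where 1̂ denotes the maximal element. -/
/-- Planar binary trees (full binary trees). -/
inductive PBT : Type
  | leaf : PBT
  | node : PBT → PBT → PBT
  deriving DecidableEq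

namespace PBT

/-- Degree: number of internal (trivalent) vertices. -/
def deg : PBT → ℕ
  | leaf => 0
  | node l r => deg l + deg r + 1

/-- `graftL S T = S/T`: graft the root of `S` onto the leftmost leaf of `T`. -/
def graftL (S : PBT) : PBT → PBT
  | leaf => S
  | node l r => node (graftL S l) r

/-- `graftR S T = S\T`: graft the root of `T` onto the rightmost leaf of `S`. -/
def graftR : PBT → PBT → PBT
  | leaf, T => T
  | node l r, T => node l (graftR r T)

/-- The unique tree with one internal vertex. -/
def Y : PBT := node leaf leaf

/-- One right rotation somewhere in the tree: the Tamari covering relation. -/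
inductive rot : PBT → PBT → Prop
  | rotate (A B C : PBT) : rot (node (node A B) C) (node A (node B C))
  | left {S S' : PBT} (T : PBT) : rot S S' → rot (node S T) (node S' T)
  | right (S : PBT) {T T' : PBT} : rot T T' → rot (node S T) (node S T')

/-- The Tamari order: reflexive transitive closure of right rotations. -/
def tamari : PBT → PBT → Prop := Relation.ReflTransGen rot

/-- Left-right reversal. -/
def rev : PBT → PBT
  | leaf => leaf
  | node l r => node (rev r) (rev l)

/-- The left comb of degree `n`. -/
def leftComb : ℕ → PBT
  | 0 => leaf
  | n + 1 => node (leftComb n) leaf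

/-- The right comb of degree `n`. -/
def rightComb : ℕ → PBT
  | 0 => leaf
  | n + 1 => node leaf (rightComb n)

end PBT

/-- Trees of degree `n`. -/
abbrev PBTdeg (n : ℕ) := {T : PBT // T.deg = n}

namespace PBT

lemma rot_deg {S T : PBT} (h : rot S T) : S.deg = T.deg := by
  induction h <;> simp [deg] <;> omega

lemma tamari_deg {S T : PBT} (h : tamari S T) : S.deg = T.deg := by
  induction h with
  | refl => rfl
  | tail _ h ih => exact ih.trans (rot_deg h)

lemma rot_graftR_left {S S' : PBT} (T : PBT) (h : rot S S') :
    rot (graftR S T) (graftR S' T) := by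
  induction h with
  | rotate A B C => exact rot.rotate A B (graftR C T)
  | left t h _ => exact rot.left _ h
  | right s _ ih => exact rot.right s ih

lemma rot_graftR_right (S : PBT) {T T' : PBT} (h : rot T T') :
    rot (graftR S T) (graftR S T') := by
  induction S with
  | leaf => exact h
  | node l r ihl ihr => exact rot.right l ihr

lemma tamari_graftR {S S' T T' : PBT} (h1 : tamari S S') (h2 : tamari T T') :
    tamari (graftR S T) (graftR S' T') := by
  have a : tamari (graftR S T) (graftR S' T) :=
    Relation.ReflTransGen.lift (fun X => graftR X T) (fun _ _ h => rot_graftR_left T h) _ _ h1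
  have b : tamari (graftR S' T) (graftR S' T') :=
    Relation.ReflTransGen.lift (fun X => graftR S' X) (fun _ _ h => rot_graftR_right S' h) _ _ h2
  exact a.trans b

lemma rot_graftR_decomp {S T U : PBT} (h : rot (graftR S T) U) :
    ∃ S' T', U = graftR S' T' ∧ ((rot S S' ∧ T' = T) ∨ (S' = S ∧ rot T T')) := by
  induction S generalizing U with
  | leaf => exact ⟨leaf, U, rfl, Or.inr ⟨rfl, h⟩⟩
  | node l r ihl ihr =>
    simp only [graftR] at h
    cases h with
    | rotate A B C =>
      exact ⟨node A (node B r), T, rfl, Or.inl ⟨rot.rotate A B r, rfl⟩⟩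
    | left t h => exact ⟨node _ r, T, rfl, Or.inl ⟨rot.left r h, rfl⟩⟩
    | right s h =>
      obtain ⟨r', T', rfl, (⟨h1, h2⟩ | ⟨h1, h2⟩)⟩ := ihr h
      · exact ⟨node l r', T', rfl, Or.inl ⟨rot.right l h1, h2⟩⟩
      · exact ⟨node l r', T', rfl, Or.inr ⟨by rw [h1], h2⟩⟩

lemma tamari_graftR_decomp {S T U : PBT} (h : tamari (graftR S T) U) :
    ∃ S' T', U = graftR S' T' ∧ tamari S S' ∧ tamari T T' := by
  induction h with
  | refl => exact ⟨S, T, rfl, .refl, .refl⟩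
  | tail _ hstep ih =>
    obtain ⟨S', T', rfl, h1, h2⟩ := ih
    obtain ⟨S'', T'', rfl, (⟨hr, rfl⟩ | ⟨rfl, hr⟩)⟩ := rot_graftR_decomp hstep
    exacts [⟨S'', T'', rfl, h1.tail hr, h2⟩, ⟨S'', T'', rfl, h1, h2.tail hr⟩]

lemma graftR_inj {S S' T T' : PBT} (hd : S.deg = S'.deg)
    (h : graftR S T = graftR S' T') : S = S' ∧ T = T' := by
  induction S generalizing S' with
  | leaf =>
    cases S' with
    | leaf => exact ⟨rfl, h⟩
    | node l r => simp [deg] at hd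
  | node l r ihl ihr =>
    cases S' with
    | leaf => simp [deg] at hd
    | node l' r' =>
      simp only [graftR, node.injEq] at h
      obtain ⟨rfl, h2⟩ := h
      have hd' : r.deg = r'.deg := by simp [deg] at hd; omega
      obtain ⟨rfl, rfl⟩ := ihr hd' h2
      exact ⟨rfl, rfl⟩

end PBT

open PBT in
/-- `(S¹,S²) ↦ S¹\S²` is an order isomorphism from
`[T¹,1̂] × [T²,1̂]` onto the upper interval `[T¹\T²,1̂]` in the Tamari order. -/
theorem tamari_upper_interval_graftR (T₁ T₂ : PBT) :
    Set.BijOn (fun p : PBT × PBT => graftR p.1 p.2)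
      ({S | tamari T₁ S} ×ˢ {S | tamari T₂ S}) {U | tamari (graftR T₁ T₂) U} ∧
    ∀ S₁ S₂ S₁' S₂' : PBT, tamari T₁ S₁ → tamari T₂ S₂ → tamari T₁ S₁' → tamari T₂ S₂' →
      (tamari (graftR S₁ S₂) (graftR S₁' S₂') ↔ (tamari S₁ S₁' ∧ tamari S₂ S₂')) := by
  constructor
  · refine ⟨?_, ?_, ?_⟩
    · rintro ⟨S₁, S₂⟩ ⟨h1, h2⟩
      exact tamari_graftR h1 h2
    · rintro ⟨S₁, S₂⟩ ⟨h1, h2⟩ ⟨S₁', S₂'⟩ ⟨h1', h2'⟩ h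
      have hd : S₁.deg = S₁'.deg := (tamari_deg h1).symm.trans (tamari_deg h1')
      obtain ⟨hA, hB⟩ := graftR_inj hd h
      exact Prod.ext hA hB
    · rintro U h
      obtain ⟨S', T', rfl, h1, h2⟩ := tamari_graftR_decomp h
      exact ⟨(S', T'), ⟨h1, h2⟩, rfl⟩
  · intro S₁ S₂ S₁' S₂' h1 h2 h1' h2'
    constructor
    · intro h
      obtain ⟨A, B, hAB, hA, hB⟩ := tamari_graftR_decomp h
      have hd : A.deg = S₁'.deg := by
        rw [← tamari_deg hA, ← tamari_deg h1, tamari_deg h1']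
      obtain ⟨rfl, rfl⟩ := graftR_inj hd hAB.symm
      exact ⟨hA, hB⟩
    · rintro ⟨a, b⟩
      exact tamari_graftR a b
end

section
/- The associative product * on the free vector space on planar binary trees, defined by | * T = T * | = T and (T¹ ∨ T²) * (T³ ∨ T⁴) = ((T¹ ∨ T²) * T³) ∨ T⁴ + T¹ ∨ (T² * (T³ ∨ T⁴)), is well-defined and associative. -/
namespace PBTaux

open PBT

noncomputable section

/-- single-tree basis vector -/
abbrev s (x : PBT) : PBT →₀ ℚ := Finsupp.single x 1

/-- the product on basis trees -/
def mul : PBT → PBT → (PBT →₀ ℚ)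
  | leaf, t => s t
  | node a b, leaf => s (node a b)
  | node a b, node c d =>
      Finsupp.mapDomain (fun S => node S d) (mul (node a b) c)
      + Finsupp.mapDomain (fun S => node a S) (mul b (node c d))
  termination_by x y => x.deg + y.deg
  decreasing_by
  · simp [deg]
  · simp [deg]

abbrev V := PBT →₀ ℚ

/-- left grafting linear map -/
def Lm (a : PBT) : V →ₗ[ℚ] V := Finsupp.lmapDomain ℚ ℚ (fun S => node a S)
def Rm (d : PBT) : V →ₗ[ℚ] V := Finsupp.lmapDomain ℚ ℚ (fun S => node S d)

def lift2 (f : PBT → PBT → V) : V →ₗ[ℚ] V →ₗ[ℚ] V :=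
  Finsupp.lift _ ℚ PBT fun x => Finsupp.lift _ ℚ PBT (f x)

lemma lift2_single (f : PBT → PBT → V) (x y : PBT) : lift2 f (s x) (s y) = f x y := by
  simp [lift2, Finsupp.lift_apply, Finsupp.sum_single_index]

def M : V →ₗ[ℚ] V →ₗ[ℚ] V := lift2 mul

def lp : PBT → PBT → V
  | leaf, _ => 0
  | node a b, y => Finsupp.mapDomain (fun S => node a S) (mul b y)

def rp : PBT → PBT → V
  | _, leaf => 0
  | x, node e f => Finsupp.mapDomain (fun S => node S f) (mul x e)

def P : V →ₗ[ℚ] V →ₗ[ℚ] V := lift2 lp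
def Q : V →ₗ[ℚ] V →ₗ[ℚ] V := lift2 rp
def Nd : V →ₗ[ℚ] V →ₗ[ℚ] V := lift2 fun t u => s (node t u)

lemma lin_ext {W : Type*} [AddCommMonoid W] [Module ℚ W] {f g : V →ₗ[ℚ] W}
    (h : ∀ x, f (s x) = g (s x)) : f = g :=
  Finsupp.lhom_ext fun a b => by
    rw [← Finsupp.smul_single_one, map_smul, map_smul, h]

lemma ext2 {B C : V →ₗ[ℚ] V →ₗ[ℚ] V} (h : ∀ x y, B (s x) (s y) = C (s x) (s y)) : B = C :=
  lin_ext fun x => lin_ext fun y => h x y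

lemma M_single (x y : PBT) : M (s x) (s y) = mul x y := lift2_single _ _ _
lemma P_single (x y : PBT) : P (s x) (s y) = lp x y := lift2_single _ _ _
lemma Q_single (x y : PBT) : Q (s x) (s y) = rp x y := lift2_single _ _ _
lemma Nd_single (x y : PBT) : Nd (s x) (s y) = s (node x y) := lift2_single _ _ _

lemma Lm_single (a t : PBT) : Lm a (s t) = s (node a t) := by
  simp [Lm, Finsupp.lmapDomain_apply, Finsupp.mapDomain_single]

lemma Rm_single (d t : PBT) : Rm d (s t) = s (node t d) := by
  simp [Rm, Finsupp.lmapDomain_apply, Finsupp.mapDomain_single]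

end

end PBTaux

namespace PBTaux
open PBT
noncomputable section

lemma mul_leaf_left (y : PBT) : mul leaf y = s y := by rw [mul]

lemma mul_leaf_right (x : PBT) : mul x leaf = s x := by cases x <;> rw [mul]

lemma M_leaf_left (v : V) : M (s leaf) v = v := by
  have : M (s leaf) = LinearMap.id (R := ℚ) (M := V) := by
    apply lin_ext; intro y; rw [M_single, LinearMap.id_apply, mul_leaf_left]
  rw [this]; rfl

lemma M_leaf_right (v : V) : M v (s leaf) = v := by
  have : M.flip (s leaf) = LinearMap.id (R := ℚ) (M := V) := by
    apply lin_ext; intro x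
    simp only [LinearMap.flip_apply, LinearMap.id_apply, M_single, mul_leaf_right]
  have h := congrArg (fun F => F v) this
  simpa using h

lemma P_def (a b : PBT) (w : V) : P (s (node a b)) w = Lm a (M (s b) w) := by
  have : P (s (node a b)) = Lm a ∘ₗ M (s b) := by
    apply lin_ext; intro y
    simp only [P_single, LinearMap.comp_apply, M_single, Lm, Finsupp.lmapDomain_apply, lp]
  rw [this]; rfl

lemma P_leaf (w : V) : P (s leaf) w = 0 := by
  have : P (s leaf) = (0 : V →ₗ[ℚ] V) := by
    apply lin_ext; intro y; simp [P_single, lp]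
  rw [this]; rfl

lemma Q_def (e f : PBT) (v : V) : Q v (s (node e f)) = Rm f (M v (s e)) := by
  have : Q.flip (s (node e f)) = Rm f ∘ₗ M.flip (s e) := by
    apply lin_ext; intro x
    simp only [LinearMap.flip_apply, LinearMap.comp_apply, Q_single, M_single, rp, Rm,
      Finsupp.lmapDomain_apply]
  have h := congrArg (fun F => F v) this
  simpa using h

lemma Q_leaf (v : V) : Q v (s leaf) = 0 := by
  have : Q.flip (s leaf) = (0 : V →ₗ[ℚ] V) := by
    apply lin_ext; intro x; simp [Q_single, rp]
  have h := congrArg (fun F => F v) this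
  simpa using h

lemma Nd_left (t : PBT) (w : V) : Nd (s t) w = Lm t w := by
  have : Nd (s t) = Lm t := lin_ext fun y => by rw [Nd_single, Lm_single]
  rw [this]

lemma Nd_right (u : V) (t : PBT) : Nd u (s t) = Rm t u := by
  have : Nd.flip (s t) = Rm t := lin_ext fun x => by
    simp only [LinearMap.flip_apply, Nd_single, Rm_single]
  have h := congrArg (fun F => F u) this
  simpa using h

lemma PL (a : PBT) (u w : V) : P (Lm a u) w = Lm a (M u w) := by
  have : P ∘ₗ Lm a = (LinearMap.llcomp ℚ V V V (Lm a)) ∘ₗ M := by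
    apply ext2; intro t y
    rw [LinearMap.comp_apply, Lm_single, P_single]
    simp only [LinearMap.comp_apply, LinearMap.llcomp_apply, M_single, lp, Lm,
      Finsupp.lmapDomain_apply]
  have h := congrArg (fun F => F u w) this
  simpa using h

lemma QR (f : PBT) (v u : V) : Q v (Rm f u) = Rm f (M v u) := by
  have : Q.flip ∘ₗ Rm f = (LinearMap.llcomp ℚ V V V (Rm f)) ∘ₗ M.flip := by
    apply ext2; intro e x
    rw [LinearMap.comp_apply, Rm_single, LinearMap.flip_apply, Q_single]
    simp only [LinearMap.comp_apply, LinearMap.llcomp_apply, LinearMap.flip_apply, M_single,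
      rp, Rm, Finsupp.lmapDomain_apply]
  have h := congrArg (fun F => F u v) this
  simpa using h

lemma PB (d : PBT) (u w : V) : P (Rm d u) w = Nd u (M (s d) w) := by
  have : P ∘ₗ Rm d = Nd.compl₂ (M (s d)) := by
    apply ext2; intro t y
    rw [LinearMap.comp_apply, Rm_single, P_single]
    simp only [LinearMap.compl₂_apply, M_single, Nd_left, lp, Lm, Finsupp.lmapDomain_apply]
  have h := congrArg (fun F => F u w) this
  simpa using h

lemma QB (c : PBT) (v w : V) : Q v (Lm c w) = Nd (M v (s c)) w := by
  have : Q.compl₂ (Lm c) = Nd ∘ₗ M.flip (s c) := by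
    apply ext2; intro x t
    rw [LinearMap.compl₂_apply, Lm_single, Q_single]
    simp only [LinearMap.comp_apply, LinearMap.flip_apply, M_single, Nd_right, rp, Rm,
      Finsupp.lmapDomain_apply]
  have h := congrArg (fun F => F v w) this
  simpa using h

lemma splitL (a b : PBT) (w : V) : M (s (node a b)) w = P (s (node a b)) w + Q (s (node a b)) w := by
  have : M (s (node a b)) = P (s (node a b)) + Q (s (node a b)) := by
    apply lin_ext; intro y
    simp only [LinearMap.add_apply, M_single, P_single, Q_single]
    cases y with
    | leaf => simp [mul_leaf_right, lp, rp, Finsupp.mapDomain_single]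
    | node c d => rw [mul]; simp only [lp, rp]; rw [add_comm]
  rw [this]; rfl

lemma splitR (e f : PBT) (v : V) : M v (s (node e f)) = P v (s (node e f)) + Q v (s (node e f)) := by
  have : M.flip (s (node e f)) = P.flip (s (node e f)) + Q.flip (s (node e f)) := by
    apply lin_ext; intro x
    simp only [LinearMap.add_apply, LinearMap.flip_apply, M_single, P_single, Q_single]
    cases x with
    | leaf => simp [mul_leaf_left, lp, rp, Finsupp.mapDomain_single]
    | node a b => rw [mul]; simp only [lp, rp]; rw [add_comm]
  have h := congrArg (fun F => F v) this
  simpa using h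

end
end PBTaux

namespace PBTaux
open PBT
noncomputable section

theorem basis_assoc (x y z : PBT) : M (M (s x) (s y)) (s z) = M (s x) (M (s y) (s z)) :=
  match x, y, z with
  | leaf, y, z => by rw [M_leaf_left, M_leaf_left]
  | x, leaf, z => by rw [M_leaf_right, M_leaf_left]
  | x, y, leaf => by rw [M_leaf_right, M_leaf_right]
  | node a b, node c d, node e f => by
    set x := node a b; set y := node c d; set z := node e f
    have e1 : P (P (s x) (s y)) (s z) = P (s x) (M (s y) (s z)) := by
      rw [P_def, PL, basis_assoc b y z, ← P_def]
    have e2 : P (Q (s x) (s y)) (s z) = Q (s x) (P (s y) (s z)) := by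
      rw [Q_def, PB, show P (s y) (s z) = Lm c (M (s d) (s z)) from P_def c d _, QB]
    have e3 : Q (M (s x) (s y)) (s z) = Q (s x) (Q (s y) (s z)) := by
      rw [Q_def, basis_assoc x y e, show Q (s y) (s z) = Rm f (M (s y) (s e)) from Q_def e f _,
        QR]
    calc M (M (s x) (s y)) (s z)
        = P (M (s x) (s y)) (s z) + Q (M (s x) (s y)) (s z) := splitR e f _
      _ = (P (P (s x) (s y)) (s z) + P (Q (s x) (s y)) (s z)) + Q (M (s x) (s y)) (s z) := by
          congr 1
          rw [splitL a b (s y), map_add, LinearMap.add_apply]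
      _ = P (s x) (M (s y) (s z)) + (Q (s x) (P (s y) (s z)) + Q (s x) (Q (s y) (s z))) := by
          rw [e1, e2, e3, add_assoc]
      _ = P (s x) (M (s y) (s z)) + Q (s x) (M (s y) (s z)) := by
          rw [← map_add, ← splitR e f (s y)]
      _ = M (s x) (M (s y) (s z)) := (splitL a b _).symm
  termination_by x.deg + y.deg + z.deg
  decreasing_by
  · simp [deg]
  · simp [deg]

theorem M_assoc (g h f : V) : M (M f g) h = M f (M g h) := by
  induction f using Finsupp.induction_linear with
  | zero => simp
  | add f1 f2 i1 i2 => simp only [map_add, LinearMap.add_apply, i1, i2]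
  | single x a =>
    induction g using Finsupp.induction_linear with
    | zero => simp
    | add g1 g2 i1 i2 => simp only [map_add, LinearMap.add_apply, i1, i2]
    | single y b =>
      induction h using Finsupp.induction_linear with
      | zero => simp
      | add h1 h2 i1 i2 => simp only [map_add, i1, i2]
      | single z c =>
        rw [← Finsupp.smul_single_one x a, ← Finsupp.smul_single_one y b,
          ← Finsupp.smul_single_one z c]
        simp only [map_smul, LinearMap.smul_apply]
        rw [basis_assoc x y z]

end
end PBTaux

namespace PBTaux
open PBT
noncomputable section

theorem M_rec (a b c d : PBT) :
    M (s (node a b)) (s (node c d)) =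
      Finsupp.mapDomain (fun S => node S d) (M (s (node a b)) (s c)) +
      Finsupp.mapDomain (fun S => node a S) (M (s b) (s (node c d))) := by
  rw [M_single, M_single, M_single, mul]

theorem M_unique_basis (m' : V →ₗ[ℚ] V →ₗ[ℚ] V)
    (h1 : ∀ T : PBT, m' (s leaf) (s T) = s T)
    (h2 : ∀ T : PBT, m' (s T) (s leaf) = s T)
    (h3 : ∀ T₁ T₂ T₃ T₄ : PBT,
      m' (s (node T₁ T₂)) (s (node T₃ T₄)) =
        Finsupp.mapDomain (fun S => node S T₄) (m' (s (node T₁ T₂)) (s T₃)) +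
        Finsupp.mapDomain (fun S => node T₁ S) (m' (s T₂) (s (node T₃ T₄)))) :
    ∀ x y : PBT, m' (s x) (s y) = M (s x) (s y)
  | leaf, y => by rw [h1, M_leaf_left]
  | node a b, leaf => by rw [h2, M_leaf_right]
  | node a b, node c d => by
      rw [h3, M_rec, M_unique_basis m' h1 h2 h3 (node a b) c, M_unique_basis m' h1 h2 h3 b (node c d)]
  termination_by x y => x.deg + y.deg
  decreasing_by
  · simp [deg]
  · simp [deg]

theorem M_unique (m' : V →ₗ[ℚ] V →ₗ[ℚ] V)
    (h1 : ∀ T : PBT, m' (s leaf) (s T) = s T)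
    (h2 : ∀ T : PBT, m' (s T) (s leaf) = s T)
    (h3 : ∀ T₁ T₂ T₃ T₄ : PBT,
      m' (s (node T₁ T₂)) (s (node T₃ T₄)) =
        Finsupp.mapDomain (fun S => node S T₄) (m' (s (node T₁ T₂)) (s T₃)) +
        Finsupp.mapDomain (fun S => node T₁ S) (m' (s T₂) (s (node T₃ T₄)))) :
    m' = M :=
  ext2 (M_unique_basis m' h1 h2 h3)

end
end PBTaux


open PBT in
/-- the product `*` on the free vector space on planar binary trees,
determined by `|` being a two-sided unit on basis elements and the recursion
`(T¹∨T²)*(T³∨T⁴) = ((T¹∨T²)*T³)∨T⁴ + T¹∨(T²*(T³∨T⁴))`, exists, is unique, and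
is associative. -/
theorem dendriform_product_wellDefined_assoc :
    ∃ m : (PBT →₀ ℚ) →ₗ[ℚ] (PBT →₀ ℚ) →ₗ[ℚ] (PBT →₀ ℚ),
      ((∀ T : PBT, m (Finsupp.single PBT.leaf 1) (Finsupp.single T 1) = Finsupp.single T 1) ∧
        (∀ T : PBT, m (Finsupp.single T 1) (Finsupp.single PBT.leaf 1) = Finsupp.single T 1) ∧
        (∀ T₁ T₂ T₃ T₄ : PBT,
          m (Finsupp.single (node T₁ T₂) 1) (Finsupp.single (node T₃ T₄) 1) =
            Finsupp.mapDomain (fun S => node S T₄)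
              (m (Finsupp.single (node T₁ T₂) 1) (Finsupp.single T₃ 1)) +
            Finsupp.mapDomain (fun S => node T₁ S)
              (m (Finsupp.single T₂ 1) (Finsupp.single (node T₃ T₄) 1)))) ∧
      (∀ f g h : PBT →₀ ℚ, m (m f g) h = m f (m g h)) ∧
      (∀ m' : (PBT →₀ ℚ) →ₗ[ℚ] (PBT →₀ ℚ) →ₗ[ℚ] (PBT →₀ ℚ),
        ((∀ T : PBT, m' (Finsupp.single PBT.leaf 1) (Finsupp.single T 1) = Finsupp.single T 1) ∧
          (∀ T : PBT, m' (Finsupp.single T 1) (Finsupp.single PBT.leaf 1) = Finsupp.single T 1) ∧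
          (∀ T₁ T₂ T₃ T₄ : PBT,
            m' (Finsupp.single (node T₁ T₂) 1) (Finsupp.single (node T₃ T₄) 1) =
              Finsupp.mapDomain (fun S => node S T₄)
                (m' (Finsupp.single (node T₁ T₂) 1) (Finsupp.single T₃ 1)) +
              Finsupp.mapDomain (fun S => node T₁ S)
                (m' (Finsupp.single T₂ 1) (Finsupp.single (node T₃ T₄) 1)))) → m' = m) := by
  open PBTaux in
  refine ⟨M, ⟨fun T => M_leaf_left _, fun T => M_leaf_right _, M_rec⟩,
    fun f g h => M_assoc g h f, fun m' ⟨h1, h2, h3⟩ => M_unique m' h1 h2 h3⟩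
end

section
/- Let θ = -L(Lᵗ)⁻¹ be the Coxeter transformation of the Tamari poset of degree n, acting on the free vector space on trees of degree n (and similarly in each degree). Then for all trees T¹, T² with |T¹| + |T²| = n, θ(T¹\T²) = -θ(T¹) * θ(T²), where * is the dendriform associative product. -/
namespace PBT

theorem deg_graftR (S T : PBT) : (graftR S T).deg = S.deg + T.deg := by
  induction S with
  | leaf => simp [graftR, deg]
  | node l r ihl ihr => simp [graftR, deg, ihr]; omega

theorem deg_graftL (S T : PBT) : (graftL S T).deg = S.deg + T.deg := by
  induction T with
  | leaf => simp [graftL, deg]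
  | node l r ihl ihr => simp [graftL, deg, ihl]; omega

theorem rot.deg_eq {a b : PBT} (h : rot a b) : a.deg = b.deg := by
  induction h with
  | rotate A B C => simp [deg]; omega
  | left T _ ih => simp [deg, ih]
  | right S _ ih => simp [deg, ih]

theorem tamari.deg_eq {a b : PBT} (h : tamari a b) : a.deg = b.deg := by
  induction h with
  | refl => rfl
  | tail _ h ih => exact ih.trans h.deg_eq

theorem tamari.refl (a : PBT) : tamari a a := Relation.ReflTransGen.refl

theorem tamari.trans {a b c : PBT} (h : tamari a b) (h' : tamari b c) : tamari a c :=
  Relation.ReflTransGen.trans h h'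

theorem rot.tamari {a b : PBT} (h : rot a b) : tamari a b :=
  Relation.ReflTransGen.single h

theorem tamari.node_left {l l' : PBT} (r : PBT) (h : tamari l l') :
    tamari (node l r) (node l' r) :=
  Relation.ReflTransGen.lift (fun t => node t r) (fun _ _ h => rot.left r h) _ _ h

theorem tamari.node_right (l : PBT) {r r' : PBT} (h : tamari r r') :
    tamari (node l r) (node l r') :=
  Relation.ReflTransGen.lift (fun t => node l t) (fun _ _ h => rot.right l h) _ _ h

theorem tamari.node_mono {l l' r r' : PBT} (h : tamari l l') (h' : tamari r r') :
    tamari (node l r) (node l' r') :=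
  (h.node_left r).trans (tamari.node_right l' h')

theorem rot.graftR_left {a a' : PBT} (b : PBT) (h : rot a a') :
    rot (graftR a b) (graftR a' b) := by
  induction h with
  | rotate A B C => exact rot.rotate A B (graftR C b)
  | left T _ ih => exact rot.left _ ‹rot _ _›
  | right S _ ih => exact rot.right S ih

theorem tamari.graftR_right (a : PBT) {b b' : PBT} (h : tamari b b') :
    tamari (graftR a b) (graftR a b') := by
  induction a with
  | leaf => exact h
  | node l r ihl ihr => exact ihr.node_right l

theorem tamari.graftR_mono {a a' b b' : PBT} (h : tamari a a') (h' : tamari b b') :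
    tamari (graftR a b) (graftR a' b') := by
  refine Relation.ReflTransGen.trans ?_ (tamari.graftR_right a' h')
  exact Relation.ReflTransGen.lift (fun t => graftR t b) (fun _ _ h => rot.graftR_left b h) _ _ h

/-- weight strictly increasing along rotations -/
def wt : PBT → ℕ
  | leaf => 0
  | node l r => wt l + wt r + deg r

theorem rot.wt_lt {a b : PBT} (h : rot a b) : wt a < wt b := by
  induction h with
  | rotate A B C => simp [wt, deg]; omega
  | left T _ ih => simp [wt]; omega
  | right S h ih => simp [wt, h.deg_eq]; omega

theorem tamari.wt_le {a b : PBT} (h : tamari a b) : wt a ≤ wt b := by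
  induction h with
  | refl => exact le_rfl
  | tail _ h ih => exact ih.trans h.wt_lt.le

theorem tamari.eq_or_wt_lt {a b : PBT} (h : tamari a b) : a = b ∨ wt a < wt b := by
  induction h with
  | refl => exact Or.inl rfl
  | tail h' h ih =>
    rcases ih with rfl | ih
    · exact Or.inr h.wt_lt
    · exact Or.inr (ih.trans_le h.wt_lt.le)

theorem tamari.antisymm {a b : PBT} (h : tamari a b) (h' : tamari b a) : a = b := by
  rcases h.eq_or_wt_lt with rfl | h1
  · rfl
  · exact absurd h'.wt_le (by omega)



/-- Split a tree at leaf number `k` (cut along the path from the root to that leaf). -/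
def splitAt : ℕ → PBT → PBT × PBT
  | _, leaf => (leaf, leaf)
  | k, node l r =>
    if k ≤ deg l then
      let p := splitAt k l
      (p.1, node p.2 r)
    else
      let p := splitAt (k - deg l - 1) r
      (node l p.1, p.2)

theorem splitAt_deg (k : ℕ) (U : PBT) (hk : k ≤ deg U) :
    (splitAt k U).1.deg = k ∧ (splitAt k U).1.deg + (splitAt k U).2.deg = deg U := by
  induction U generalizing k with
  | leaf => simp [deg] at hk; simp [splitAt, hk, deg]
  | node l r ihl ihr =>
    by_cases h : k ≤ deg l
    · obtain ⟨h1, h2⟩ := ihl k h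
      simp only [splitAt, if_pos h, deg]
      constructor
      · exact h1
      · omega
    · have hk' : k - deg l - 1 ≤ deg r := by simp [deg] at hk; omega
      obtain ⟨h1, h2⟩ := ihr (k - deg l - 1) hk'
      simp only [splitAt, if_neg h, deg]
      constructor
      · omega
      · omega

theorem splitAt_zero (U : PBT) : splitAt 0 U = (leaf, U) := by
  induction U with
  | leaf => rfl
  | node l r ihl ihr => simp [splitAt, ihl]

theorem splitAt_self (U : PBT) : splitAt U.deg U = (U, leaf) := by
  induction U with
  | leaf => rfl
  | node l r ihl ihr =>
    have h : ¬ (deg (node l r) ≤ deg l) := by simp [deg]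
    have h2 : deg (node l r) - deg l - 1 = deg r := by simp [deg]; omega
    simp [splitAt, h, h2, ihr]

theorem splitAt_graftL (x y : PBT) : splitAt x.deg (graftL x y) = (x, y) := by
  induction y with
  | leaf => simpa [graftL] using splitAt_self x
  | node l r ihl ihr =>
    have hdeg : (graftL x l).deg = x.deg + l.deg := deg_graftL x l
    have h : x.deg ≤ deg (graftL x l) := by omega
    simp [graftL, splitAt, h, ihl]

theorem splitAt_graftR (x y : PBT) : splitAt x.deg (graftR x y) = (x, y) := by
  induction x with
  | leaf => simpa [graftR, deg] using splitAt_zero y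
  | node l r ihl ihr =>
    have h : ¬ (deg (node l r) ≤ deg l) := by simp [deg]
    have h2 : deg (node l r) - deg l - 1 = deg r := by simp [deg]; omega
    simp only [graftR, splitAt, deg] at h h2 ⊢
    rw [if_neg h, h2, ihr]

/-- aux: `(a\b, r) ≤ a\(b∨r)` -/
theorem tamari.graftR_node (a b r : PBT) :
    tamari (node (graftR a b) r) (graftR a (node b r)) := by
  induction a with
  | leaf => simp [graftR]; exact tamari.refl _
  | node p q ihl ihr =>
    simp only [graftR]
    exact ((rot.rotate p (graftR q b) r).tamari).trans (ihr.node_right p)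

/-- aux: `(l∨a)/b ≤ (l, a/b)` -/
theorem tamari.graftL_node (l a b : PBT) :
    tamari (graftL (node l a) b) (node l (graftL a b)) := by
  induction b with
  | leaf => simp [graftL]; exact tamari.refl _
  | node p q ihl ihr =>
    simp only [graftL]
    exact ((ihl.node_left q).trans (rot.rotate l (graftL a p) q).tamari)

/-- P2: every tree lies in the interval of its split. -/
theorem splitAt_mem_interval (k : ℕ) (U : PBT) :
    tamari (graftL (splitAt k U).1 (splitAt k U).2) U ∧
      tamari U (graftR (splitAt k U).1 (splitAt k U).2) := by
  induction U generalizing k with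
  | leaf =>
    constructor
    · exact tamari.refl _
    · exact tamari.refl _
  | node l r ihl ihr =>
    by_cases h : k ≤ deg l
    · obtain ⟨h1, h2⟩ := ihl k
      simp only [splitAt, if_pos h]
      constructor
      · -- graftL a (node b r) = node (graftL a b) r
        simpa [graftL] using h1.node_left r
      · exact (h2.node_left r).trans (tamari.graftR_node _ _ r)
    · obtain ⟨h1, h2⟩ := ihr (k - deg l - 1)
      simp only [splitAt, if_neg h]
      constructor
      · exact (tamari.graftL_node l _ _).trans (h1.node_right l)
      · simpa [graftR] using h2.node_right l

/-- P3: splitting is componentwise monotone along a rotation. -/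
theorem splitAt_mono_rot {U V : PBT} (h : rot U V) (k : ℕ) :
    tamari (splitAt k U).1 (splitAt k V).1 ∧ tamari (splitAt k U).2 (splitAt k V).2 := by
  induction h generalizing k with
  | rotate A B C =>
    by_cases h1 : k ≤ deg A
    · have hAB : k ≤ deg (node A B) := by simp [deg]; omega
      simp only [splitAt, if_pos h1, if_pos hAB]
      exact ⟨tamari.refl _, (rot.rotate _ B C).tamari⟩
    · by_cases h2 : k ≤ deg (node A B)
      · -- a < k ≤ a + b + 1 : both sides equal
        have h3 : ¬ k ≤ deg A := h1
        have h4 : k - deg A - 1 ≤ deg B := by simp [deg] at h2; omega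
        simp only [splitAt, if_pos h2, if_neg h3, if_pos h4]
        exact ⟨tamari.refl _, tamari.refl _⟩
      · have h3 : ¬ k ≤ deg A := h1
        have h4 : ¬ k - deg A - 1 ≤ deg B := by simp [deg] at h2; omega
        have h5 : k - deg (node A B) - 1 = k - deg A - 1 - deg B - 1 := by simp [deg]; omega
        simp only [splitAt, if_neg h2, if_neg h3, if_neg h4, h5]
        exact ⟨((rot.rotate A B _).tamari), tamari.refl _⟩
  | @left S S' T h ih =>
    have hdeg : deg S = deg S' := h.deg_eq
    by_cases h1 : k ≤ deg S
    · obtain ⟨ha, hb⟩ := ih k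
      simp only [splitAt, if_pos h1, hdeg ▸ h1, if_pos (hdeg ▸ h1)]
      exact ⟨ha, hb.node_left T⟩
    · simp only [splitAt, if_neg h1, if_neg (hdeg ▸ h1)]
      rw [← hdeg]
      exact ⟨(h.tamari).node_left _, tamari.refl _⟩
  | @right S T T' h ih =>
    by_cases h1 : k ≤ deg S
    · simp only [splitAt, if_pos h1]
      exact ⟨tamari.refl _, (h.tamari).node_right _⟩
    · obtain ⟨ha, hb⟩ := ih (k - deg S - 1)
      simp only [splitAt, if_neg h1]
      exact ⟨ha.node_right S, hb⟩

theorem splitAt_mono_tamari {U V : PBT} (h : tamari U V) (k : ℕ) :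
    tamari (splitAt k U).1 (splitAt k V).1 ∧ tamari (splitAt k U).2 (splitAt k V).2 := by
  induction h with
  | refl => exact ⟨tamari.refl _, tamari.refl _⟩
  | tail _ h ih =>
    obtain ⟨h1, h2⟩ := splitAt_mono_rot h k
    exact ⟨ih.1.trans h1, ih.2.trans h2⟩

/-- uniqueness of the interval containing a given tree. -/
theorem splitAt_eq_of_mem_interval {S₁ S₂ U : PBT}
    (h1 : tamari (graftL S₁ S₂) U) (h2 : tamari U (graftR S₁ S₂)) :
    splitAt S₁.deg U = (S₁, S₂) := by
  have a1 := splitAt_mono_tamari h1 S₁.deg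
  have a2 := splitAt_mono_tamari h2 S₁.deg
  rw [splitAt_graftL] at a1
  rw [splitAt_graftR] at a2
  have e1 : (splitAt S₁.deg U).1 = S₁ := a2.1.antisymm a1.1
  have e2 : (splitAt S₁.deg U).2 = S₂ := a2.2.antisymm a1.2
  rw [Prod.ext_iff]
  exact ⟨e1, e2⟩

/-- one rotation step from a grafted tree decomposes. -/
theorem rot_graftR_decomp_s16 : ∀ (v₁ v₂ U' : PBT), rot (graftR v₁ v₂) U' →
    ∃ w₁ w₂, U' = graftR w₁ w₂ ∧ tamari v₁ w₁ ∧ tamari v₂ w₂ ∧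
      w₁.deg = v₁.deg ∧ w₂.deg = v₂.deg := by
  intro v₁
  induction v₁ with
  | leaf =>
    intro v₂ U' h
    exact ⟨leaf, U', rfl, tamari.refl _, h.tamari, rfl, h.deg_eq.symm⟩
  | node l r ihl ihr =>
    intro v₂ U' h
    have h' : rot (node l (graftR r v₂)) U' := h
    cases h' with
    | rotate A B C =>
      refine ⟨node A (node B r), v₂, rfl, (rot.rotate A B r).tamari, tamari.refl _, ?_, rfl⟩
      simp [deg]; omega
    | left T hS =>
      rename_i S'
      exact ⟨node S' r, v₂, rfl, (hS.tamari).node_left r, tamari.refl _,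
        by simp [deg, hS.deg_eq], rfl⟩
    | right S hT =>
      rename_i T'
      obtain ⟨w₁, w₂, rfl, hw1, hw2, hd1, hd2⟩ := ihr v₂ T' hT
      exact ⟨node l w₁, w₂, rfl, hw1.node_right l, hw2, by simp [deg, hd1], hd2⟩

/-- the upper set of `graftR x y` consists of grafted trees. -/
theorem tamari_graftR_decomp_s16 {x y U : PBT} (h : tamari (graftR x y) U) :
    ∃ v₁ v₂, U = graftR v₁ v₂ ∧ tamari x v₁ ∧ tamari y v₂ ∧
      v₁.deg = x.deg ∧ v₂.deg = y.deg := by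
  induction h with
  | refl => exact ⟨x, y, rfl, tamari.refl _, tamari.refl _, rfl, rfl⟩
  | tail _ hstep ih =>
    obtain ⟨v₁, v₂, rfl, h1, h2, d1, d2⟩ := ih
    obtain ⟨w₁, w₂, rfl, h1', h2', d1', d2'⟩ := rot_graftR_decomp_s16 v₁ v₂ _ hstep
    exact ⟨w₁, w₂, rfl, h1.trans h1', h2.trans h2', d1' ▸ d1, d2' ▸ d2⟩

/-- injectivity of grafting at fixed degree. -/
theorem graftR_inj_s16 {v₁ v₂ w₁ w₂ : PBT} (hdeg : v₁.deg = w₁.deg)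
    (h : graftR v₁ v₂ = graftR w₁ w₂) : v₁ = w₁ ∧ v₂ = w₂ := by
  induction v₁ generalizing w₁ with
  | leaf =>
    cases w₁ with
    | leaf => exact ⟨rfl, h⟩
    | node a b => simp [deg] at hdeg
  | node l r ihl ihr =>
    cases w₁ with
    | leaf => simp [deg] at hdeg
    | node a b =>
      simp only [graftR, node.injEq] at h
      have hlr : deg l = deg a ∧ deg r = deg b := by
        have := congrArg deg h.1
        simp [deg] at hdeg this
        omega
      obtain ⟨h1, h2⟩ := ihr (w₁ := b) hlr.2 h.2
      exact ⟨by rw [h.1, h1], h2⟩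


end PBT

open Classical in
/-- Incidence matrix of the Tamari order in degree `n`. -/
noncomputable def Lmat (n : ℕ) [Fintype (PBTdeg n)] : Matrix (PBTdeg n) (PBTdeg n) ℚ :=
  Matrix.of fun v w => if PBT.tamari v.1 w.1 then 1 else 0

/-- Coxeter transformation `θ = -L (Lᵗ)⁻¹` of the Tamari poset of degree `n`. -/
noncomputable def thetaMat (n : ℕ) [Fintype (PBTdeg n)] : Matrix (PBTdeg n) (PBTdeg n) ℚ :=
  -(Lmat n * ((Lmat n).transpose)⁻¹)

/-- Basis vector of a tree `T` in the free vector space on trees of degree `n`. -/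
def delta (n : ℕ) (T : PBT) : PBTdeg n → ℚ := fun U => if U.1 = T then 1 else 0

open Classical in
/-- Bilinear extension of the dendriform product `S * T = ∑_{S/T ≤ U ≤ S\T} U`. -/
noncomputable def dprod {n₁ n₂ : ℕ} [Fintype (PBTdeg n₁)] [Fintype (PBTdeg n₂)]
    (f : PBTdeg n₁ → ℚ) (g : PBTdeg n₂ → ℚ) : PBTdeg (n₁ + n₂) → ℚ :=
  fun U => ∑ S₁ : PBTdeg n₁, ∑ S₂ : PBTdeg n₂,
    f S₁ * g S₂ *
      (if PBT.tamari (PBT.graftL S₁.1 S₂.1) U.1 ∧ PBT.tamari U.1 (PBT.graftR S₁.1 S₂.1)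
        then 1 else 0)

open Classical in
/-- Bilinear extension of the left grafting `/`. -/
noncomputable def gprodL {n₁ n₂ : ℕ} [Fintype (PBTdeg n₁)] [Fintype (PBTdeg n₂)]
    (f : PBTdeg n₁ → ℚ) (g : PBTdeg n₂ → ℚ) : PBTdeg (n₁ + n₂) → ℚ :=
  fun U => ∑ S₁ : PBTdeg n₁, ∑ S₂ : PBTdeg n₂,
    f S₁ * g S₂ * (if U.1 = PBT.graftL S₁.1 S₂.1 then 1 else 0)
-- ==== auxiliary matrix-level development ====
open PBT

open Classical in
/-- Bilinear extension of the right grafting `\`. -/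
noncomputable def gprodR {n₁ n₂ : ℕ} [Fintype (PBTdeg n₁)] [Fintype (PBTdeg n₂)]
    (f : PBTdeg n₁ → ℚ) (g : PBTdeg n₂ → ℚ) : PBTdeg (n₁ + n₂) → ℚ :=
  fun U => ∑ S₁ : PBTdeg n₁, ∑ S₂ : PBTdeg n₂,
    f S₁ * g S₂ * (if U.1 = PBT.graftR S₁.1 S₂.1 then 1 else 0)

section counting

variable {n₁ n₂ : ℕ} [Fintype (PBTdeg n₁)] [Fintype (PBTdeg n₂)] [Fintype (PBTdeg (n₁ + n₂))]

open Classical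

/-- counting lemma for the interval product. -/
theorem countStar (v₁ v₂ : PBT) (h₁ : v₁.deg = n₁) (h₂ : v₂.deg = n₂) (W : PBTdeg (n₁ + n₂)) :
    (∑ S₁ : PBTdeg n₁, ∑ S₂ : PBTdeg n₂,
      (if tamari S₁.1 v₁ then (1:ℚ) else 0) * (if tamari S₂.1 v₂ then 1 else 0) *
        (if tamari (graftL S₁.1 S₂.1) W.1 ∧ tamari W.1 (graftR S₁.1 S₂.1) then 1 else 0)) =
      if tamari W.1 (graftR v₁ v₂) then 1 else 0 := by
  by_cases hW : tamari W.1 (graftR v₁ v₂)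
  · rw [if_pos hW]
    have hdegW : n₁ ≤ W.1.deg := by rw [W.2]; omega
    obtain ⟨hd1, hd2⟩ := splitAt_deg n₁ W.1 hdegW
    set a : PBTdeg n₁ := ⟨(splitAt n₁ W.1).1, hd1⟩ with ha
    set b : PBTdeg n₂ := ⟨(splitAt n₁ W.1).2, by have := W.2; omega⟩ with hb
    have hmem := splitAt_mem_interval n₁ W.1
    have hmono := splitAt_mono_tamari hW n₁
    have esp : splitAt n₁ (graftR v₁ v₂) = (v₁, v₂) := by
      rw [← h₁]; exact splitAt_graftR v₁ v₂
    rw [esp] at hmono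
    rw [Finset.sum_eq_single a]
    · rw [Finset.sum_eq_single b]
      · rw [if_pos hmono.1, if_pos hmono.2, if_pos ⟨hmem.1, hmem.2⟩]
        norm_num
      · intro s₂ _ hne
        rcases Classical.em (tamari (graftL a.1 s₂.1) W.1 ∧ tamari W.1 (graftR a.1 s₂.1)) with h | h
        · exfalso
          have := splitAt_eq_of_mem_interval h.1 h.2
          rw [show a.1.deg = n₁ from a.2] at this
          apply hne
          apply Subtype.ext
          rw [Prod.ext_iff] at this
          exact this.2.symm
        · rw [if_neg h]; ring
      · intro h; exact absurd (Finset.mem_univ b) h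
    · intro s₁ _ hne
      apply Finset.sum_eq_zero
      intro s₂ _
      rcases Classical.em (tamari (graftL s₁.1 s₂.1) W.1 ∧ tamari W.1 (graftR s₁.1 s₂.1)) with h | h
      · exfalso
        have := splitAt_eq_of_mem_interval h.1 h.2
        rw [show s₁.1.deg = n₁ from s₁.2] at this
        apply hne
        apply Subtype.ext
        rw [Prod.ext_iff] at this
        exact this.1.symm
      · rw [if_neg h]; ring
    · intro h; exact absurd (Finset.mem_univ a) h
  · rw [if_neg hW]
    apply Finset.sum_eq_zero; intro s₁ _
    apply Finset.sum_eq_zero; intro s₂ _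
    rcases Classical.em (tamari s₁.1 v₁) with t1 | t1
    · rcases Classical.em (tamari s₂.1 v₂) with t2 | t2
      · rcases Classical.em (tamari (graftL s₁.1 s₂.1) W.1 ∧ tamari W.1 (graftR s₁.1 s₂.1)) with h | h
        · exact absurd (h.2.trans (tamari.graftR_mono t1 t2)) hW
        · rw [if_neg h]; ring
      · rw [if_neg t2]; ring
    · rw [if_neg t1]; ring

/-- counting lemma for the upper sets of grafted trees. -/
theorem countStar2 (x y : PBT) (hx : x.deg = n₁) (hy : y.deg = n₂) (W : PBTdeg (n₁ + n₂)) :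
    (∑ v₁ : PBTdeg n₁, ∑ v₂ : PBTdeg n₂,
      (if tamari x v₁.1 then (1:ℚ) else 0) * (if tamari y v₂.1 then 1 else 0) *
        (if W.1 = graftR v₁.1 v₂.1 then 1 else 0)) =
      if tamari (graftR x y) W.1 then 1 else 0 := by
  by_cases hW : tamari (graftR x y) W.1
  · rw [if_pos hW]
    obtain ⟨w₁, w₂, hWeq, ht1, ht2, hd1, hd2⟩ := tamari_graftR_decomp_s16 hW
    set a : PBTdeg n₁ := ⟨w₁, by rw [hd1, hx]⟩
    set b : PBTdeg n₂ := ⟨w₂, by rw [hd2, hy]⟩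
    rw [Finset.sum_eq_single a]
    · rw [Finset.sum_eq_single b]
      · rw [if_pos ht1, if_pos ht2, if_pos hWeq]; norm_num
      · intro s₂ _ hne
        rcases Classical.em (W.1 = graftR a.1 s₂.1) with h | h
        · exfalso
          obtain ⟨e1, e2⟩ := graftR_inj_s16 (v₁ := w₁) rfl (hWeq ▸ h)
          exact hne (Subtype.ext e2.symm)
        · rw [if_neg h]; ring
      · intro h; exact absurd (Finset.mem_univ b) h
    · intro s₁ _ hne
      apply Finset.sum_eq_zero; intro s₂ _
      rcases Classical.em (W.1 = graftR s₁.1 s₂.1) with h | h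
      · exfalso
        have hdeq : w₁.deg = s₁.1.deg := by rw [hd1, hx, s₁.2]
        obtain ⟨e1, e2⟩ := graftR_inj_s16 hdeq (hWeq ▸ h)
        exact hne (Subtype.ext e1.symm)
      · rw [if_neg h]; ring
    · intro h; exact absurd (Finset.mem_univ a) h
  · rw [if_neg hW]
    apply Finset.sum_eq_zero; intro s₁ _
    apply Finset.sum_eq_zero; intro s₂ _
    rcases Classical.em (tamari x s₁.1) with t1 | t1
    · rcases Classical.em (tamari y s₂.1) with t2 | t2
      · rcases Classical.em (W.1 = graftR s₁.1 s₂.1) with h | h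
        · exact absurd (h ▸ tamari.graftR_mono t1 t2) hW
        · rw [if_neg h]; ring
      · rw [if_neg t2]; ring
    · rw [if_neg t1]; ring

end counting

section invert

variable (n : ℕ) [Fintype (PBTdeg n)]

open Classical

theorem Lmat_blockTriangular : (Lmat n).BlockTriangular (fun v => wt v.1) := by
  intro i j h
  have h' : wt j.1 < wt i.1 := h
  show (if tamari i.1 j.1 then (1:ℚ) else 0) = 0
  rw [if_neg]
  intro ht
  exact absurd ht.wt_le (by omega)

theorem Lmat_det : (Lmat n).det = 1 := by
  rw [(Lmat_blockTriangular n).det]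
  apply Finset.prod_eq_one
  intro a _
  have : (Lmat n).toSquareBlock (fun v => wt v.1) a = 1 := by
    ext i j
    show (if tamari i.1.1 j.1.1 then (1:ℚ) else 0) = (1 : Matrix _ _ ℚ) i j
    by_cases h : tamari i.1.1 j.1.1
    · have : i = j := by
        rcases h.eq_or_wt_lt with he | hlt
        · exact Subtype.ext (Subtype.ext he)
        · exact absurd hlt (by rw [i.2, j.2]; omega)
      rw [if_pos h, this, Matrix.one_apply_eq]
    · rw [if_neg h, Matrix.one_apply_ne]
      intro he
      exact h (he ▸ tamari.refl _)
  rw [this, Matrix.det_one]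

theorem Nmat_det : ((Lmat n).transpose).det = 1 := by
  rw [Matrix.det_transpose]; exact Lmat_det n

theorem Nmat_mulVec_inv (f : PBTdeg n → ℚ) :
    ((Lmat n).transpose).mulVec ((((Lmat n).transpose)⁻¹).mulVec f) = f := by
  rw [Matrix.mulVec_mulVec, Matrix.mul_nonsing_inv _ (by rw [Nmat_det]; exact isUnit_one),
    Matrix.one_mulVec]

theorem Nmat_mulVec_injective {f g : PBTdeg n → ℚ}
    (h : ((Lmat n).transpose).mulVec f = ((Lmat n).transpose).mulVec g) : f = g := by
  have hinv : ((Lmat n).transpose)⁻¹ * (Lmat n).transpose = 1 :=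
    Matrix.nonsing_inv_mul _ (by rw [Nmat_det]; exact isUnit_one)
  have h2 := congrArg (fun v => (((Lmat n).transpose)⁻¹).mulVec v) h
  simpa [Matrix.mulVec_mulVec, hinv, Matrix.one_mulVec] using h2

theorem Nmat_mulVec_delta (x : PBT) (hx : x.deg = n) :
    ((Lmat n).transpose).mulVec (delta n x) = fun v => if tamari x v.1 then 1 else 0 := by
  funext v
  show (∑ w, (Lmat n) w v * (if w.1 = x then (1:ℚ) else 0)) = _
  rw [Finset.sum_eq_single (⟨x, hx⟩ : PBTdeg n)]
  · show (if tamari x v.1 then (1:ℚ) else 0) * _ = _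
    rw [if_pos rfl, mul_one]
  · intro w _ hne
    rw [if_neg (fun he => hne (Subtype.ext he)), mul_zero]
  · intro h; exact absurd (Finset.mem_univ _) h

end invert
section push

open PBT Classical

variable {n₁ n₂ : ℕ} [Fintype (PBTdeg n₁)] [Fintype (PBTdeg n₂)] [Fintype (PBTdeg (n₁ + n₂))]

/-- collapse of a sum against a delta-like indicator. -/
theorem sumCollapse {n : ℕ} [Fintype (PBTdeg n)] (P : PBT → Prop) (t : PBT) (ht : t.deg = n)
    (c : ℚ) :
    ∑ V : PBTdeg n, (if P V.1 then (1:ℚ) else 0) * (c * (if V.1 = t then 1 else 0)) =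
      c * (if P t then (1:ℚ) else 0) := by
  rw [Finset.sum_eq_single (⟨t, ht⟩ : PBTdeg n)]
  · rw [if_pos rfl, mul_one]; ring
  · intro w _ hne
    rw [if_neg (fun he => hne (Subtype.ext he)), mul_zero, mul_zero]
  · intro h; exact absurd (Finset.mem_univ _) h

/-- the middle normal form used in both push lemmas. -/
noncomputable def midR (f : PBTdeg n₁ → ℚ) (g : PBTdeg n₂ → ℚ) (W : PBTdeg (n₁ + n₂)) : ℚ :=
  ∑ S₁ : PBTdeg n₁, ∑ S₂ : PBTdeg n₂,
    f S₁ * g S₂ * (if tamari (graftR S₁.1 S₂.1) W.1 then 1 else 0)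

noncomputable def midL (f : PBTdeg n₁ → ℚ) (g : PBTdeg n₂ → ℚ) (W : PBTdeg (n₁ + n₂)) : ℚ :=
  ∑ S₁ : PBTdeg n₁, ∑ S₂ : PBTdeg n₂,
    f S₁ * g S₂ * (if tamari W.1 (graftR S₁.1 S₂.1) then 1 else 0)

theorem mulVec_gprodR_transpose (f : PBTdeg n₁ → ℚ) (g : PBTdeg n₂ → ℚ) (W : PBTdeg (n₁ + n₂)) :
    (((Lmat (n₁ + n₂)).transpose).mulVec (gprodR f g)) W = midR f g W := by
  show (∑ V, (Lmat (n₁+n₂)) V W * gprodR f g V) = _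
  simp only [gprodR, Finset.mul_sum, midR]
  rw [Finset.sum_comm]
  refine Finset.sum_congr rfl fun S₁ _ => ?_
  rw [Finset.sum_comm]
  refine Finset.sum_congr rfl fun S₂ _ => ?_
  exact sumCollapse (fun v => tamari v W.1) (graftR S₁.1 S₂.1)
    (by rw [deg_graftR, S₁.2, S₂.2]) (f S₁ * g S₂)

theorem mulVec_gprodR (f : PBTdeg n₁ → ℚ) (g : PBTdeg n₂ → ℚ) (W : PBTdeg (n₁ + n₂)) :
    ((Lmat (n₁ + n₂)).mulVec (gprodR f g)) W = midL f g W := by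
  show (∑ V, (Lmat (n₁+n₂)) W V * gprodR f g V) = _
  simp only [gprodR, Finset.mul_sum, midL]
  rw [Finset.sum_comm]
  refine Finset.sum_congr rfl fun S₁ _ => ?_
  rw [Finset.sum_comm]
  refine Finset.sum_congr rfl fun S₂ _ => ?_
  exact sumCollapse (fun v => tamari W.1 v) (graftR S₁.1 S₂.1)
    (by rw [deg_graftR, S₁.2, S₂.2]) (f S₁ * g S₂)

theorem gprodR_push (f : PBTdeg n₁ → ℚ) (g : PBTdeg n₂ → ℚ) :
    ((Lmat (n₁ + n₂)).transpose).mulVec (gprodR f g) =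
      gprodR (((Lmat n₁).transpose).mulVec f) (((Lmat n₂).transpose).mulVec g) := by
  funext W
  rw [mulVec_gprodR_transpose]
  show midR f g W = ∑ v₁ : PBTdeg n₁, ∑ v₂ : PBTdeg n₂,
      (∑ S₁, (Lmat n₁) S₁ v₁ * f S₁) * (∑ S₂, (Lmat n₂) S₂ v₂ * g S₂) *
        (if W.1 = graftR v₁.1 v₂.1 then 1 else 0)
  have rhs_eq : ∀ (v₁ : PBTdeg n₁) (v₂ : PBTdeg n₂),
      (∑ S₁, (Lmat n₁) S₁ v₁ * f S₁) * (∑ S₂, (Lmat n₂) S₂ v₂ * g S₂) *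
        (if W.1 = graftR v₁.1 v₂.1 then 1 else 0) =
      ∑ S₁ : PBTdeg n₁, ∑ S₂ : PBTdeg n₂, f S₁ * g S₂ *
        ((if tamari S₁.1 v₁.1 then (1:ℚ) else 0) * (if tamari S₂.1 v₂.1 then 1 else 0) *
          (if W.1 = graftR v₁.1 v₂.1 then 1 else 0)) := by
    intro v₁ v₂
    rw [Finset.sum_mul_sum, Finset.sum_mul]
    refine Finset.sum_congr rfl fun S₁ _ => ?_
    rw [Finset.sum_mul]
    refine Finset.sum_congr rfl fun S₂ _ => ?_
    show ((if tamari S₁.1 v₁.1 then (1:ℚ) else 0) * f S₁) *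
      ((if tamari S₂.1 v₂.1 then (1:ℚ) else 0) * g S₂) * _ = _
    ring
  symm
  calc (∑ v₁ : PBTdeg n₁, ∑ v₂ : PBTdeg n₂,
      (∑ S₁, (Lmat n₁) S₁ v₁ * f S₁) * (∑ S₂, (Lmat n₂) S₂ v₂ * g S₂) *
        (if W.1 = graftR v₁.1 v₂.1 then 1 else 0))
      = ∑ v₁ : PBTdeg n₁, ∑ v₂ : PBTdeg n₂, ∑ S₁ : PBTdeg n₁, ∑ S₂ : PBTdeg n₂,
          f S₁ * g S₂ *
            ((if tamari S₁.1 v₁.1 then (1:ℚ) else 0) * (if tamari S₂.1 v₂.1 then 1 else 0) *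
              (if W.1 = graftR v₁.1 v₂.1 then 1 else 0)) :=
        Finset.sum_congr rfl fun v₁ _ => Finset.sum_congr rfl fun v₂ _ => rhs_eq v₁ v₂
    _ = ∑ v₁ : PBTdeg n₁, ∑ S₁ : PBTdeg n₁, ∑ v₂ : PBTdeg n₂, ∑ S₂ : PBTdeg n₂, _ :=
        Finset.sum_congr rfl fun v₁ _ => Finset.sum_comm
    _ = ∑ S₁ : PBTdeg n₁, ∑ v₁ : PBTdeg n₁, ∑ v₂ : PBTdeg n₂, ∑ S₂ : PBTdeg n₂, _ :=
        Finset.sum_comm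
    _ = ∑ S₁ : PBTdeg n₁, ∑ v₁ : PBTdeg n₁, ∑ S₂ : PBTdeg n₂, ∑ v₂ : PBTdeg n₂, _ :=
        Finset.sum_congr rfl fun S₁ _ => Finset.sum_congr rfl fun v₁ _ => Finset.sum_comm
    _ = ∑ S₁ : PBTdeg n₁, ∑ S₂ : PBTdeg n₂, ∑ v₁ : PBTdeg n₁, ∑ v₂ : PBTdeg n₂,
          f S₁ * g S₂ *
            ((if tamari S₁.1 v₁.1 then (1:ℚ) else 0) * (if tamari S₂.1 v₂.1 then 1 else 0) *
              (if W.1 = graftR v₁.1 v₂.1 then 1 else 0)) :=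
        Finset.sum_congr rfl fun S₁ _ => Finset.sum_comm
    _ = midR f g W := by
        refine Finset.sum_congr rfl fun S₁ _ => Finset.sum_congr rfl fun S₂ _ => ?_
        rw [show (∑ v₁ : PBTdeg n₁, ∑ v₂ : PBTdeg n₂,
          f S₁ * g S₂ *
            ((if tamari S₁.1 v₁.1 then (1:ℚ) else 0) * (if tamari S₂.1 v₂.1 then 1 else 0) *
              (if W.1 = graftR v₁.1 v₂.1 then 1 else 0))) =
          f S₁ * g S₂ * ∑ v₁ : PBTdeg n₁, ∑ v₂ : PBTdeg n₂,
            ((if tamari S₁.1 v₁.1 then (1:ℚ) else 0) * (if tamari S₂.1 v₂.1 then 1 else 0) *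
              (if W.1 = graftR v₁.1 v₂.1 then 1 else 0)) from by
            rw [Finset.mul_sum]
            exact Finset.sum_congr rfl fun v₁ _ => (Finset.mul_sum _ _ _).symm]
        rw [countStar2 S₁.1 S₂.1 S₁.2 S₂.2 W]

end push
section push2

open PBT Classical

variable {n₁ n₂ : ℕ} [Fintype (PBTdeg n₁)] [Fintype (PBTdeg n₂)] [Fintype (PBTdeg (n₁ + n₂))]

theorem dprod_push (f : PBTdeg n₁ → ℚ) (g : PBTdeg n₂ → ℚ) :
    (Lmat (n₁ + n₂)).mulVec (gprodR f g) =
      dprod ((Lmat n₁).mulVec f) ((Lmat n₂).mulVec g) := by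
  funext W
  rw [mulVec_gprodR]
  show midL f g W = ∑ v₁ : PBTdeg n₁, ∑ v₂ : PBTdeg n₂,
      (∑ S₁, (Lmat n₁) v₁ S₁ * f S₁) * (∑ S₂, (Lmat n₂) v₂ S₂ * g S₂) *
        (if tamari (graftL v₁.1 v₂.1) W.1 ∧ tamari W.1 (graftR v₁.1 v₂.1) then 1 else 0)
  have rhs_eq : ∀ (v₁ : PBTdeg n₁) (v₂ : PBTdeg n₂),
      (∑ S₁, (Lmat n₁) v₁ S₁ * f S₁) * (∑ S₂, (Lmat n₂) v₂ S₂ * g S₂) *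
        (if tamari (graftL v₁.1 v₂.1) W.1 ∧ tamari W.1 (graftR v₁.1 v₂.1) then 1 else 0) =
      ∑ S₁ : PBTdeg n₁, ∑ S₂ : PBTdeg n₂, f S₁ * g S₂ *
        ((if tamari v₁.1 S₁.1 then (1:ℚ) else 0) * (if tamari v₂.1 S₂.1 then 1 else 0) *
          (if tamari (graftL v₁.1 v₂.1) W.1 ∧ tamari W.1 (graftR v₁.1 v₂.1) then 1 else 0)) := by
    intro v₁ v₂
    rw [Finset.sum_mul_sum, Finset.sum_mul]
    refine Finset.sum_congr rfl fun S₁ _ => ?_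
    rw [Finset.sum_mul]
    refine Finset.sum_congr rfl fun S₂ _ => ?_
    show ((if tamari v₁.1 S₁.1 then (1:ℚ) else 0) * f S₁) *
      ((if tamari v₂.1 S₂.1 then (1:ℚ) else 0) * g S₂) * _ = _
    ring
  symm
  calc (∑ v₁ : PBTdeg n₁, ∑ v₂ : PBTdeg n₂,
      (∑ S₁, (Lmat n₁) v₁ S₁ * f S₁) * (∑ S₂, (Lmat n₂) v₂ S₂ * g S₂) *
        (if tamari (graftL v₁.1 v₂.1) W.1 ∧ tamari W.1 (graftR v₁.1 v₂.1) then 1 else 0))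
      = ∑ v₁ : PBTdeg n₁, ∑ v₂ : PBTdeg n₂, ∑ S₁ : PBTdeg n₁, ∑ S₂ : PBTdeg n₂,
          f S₁ * g S₂ *
            ((if tamari v₁.1 S₁.1 then (1:ℚ) else 0) * (if tamari v₂.1 S₂.1 then 1 else 0) *
              (if tamari (graftL v₁.1 v₂.1) W.1 ∧ tamari W.1 (graftR v₁.1 v₂.1) then 1 else 0)) :=
        Finset.sum_congr rfl fun v₁ _ => Finset.sum_congr rfl fun v₂ _ => rhs_eq v₁ v₂
    _ = ∑ v₁ : PBTdeg n₁, ∑ S₁ : PBTdeg n₁, ∑ v₂ : PBTdeg n₂, ∑ S₂ : PBTdeg n₂, _ :=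
        Finset.sum_congr rfl fun v₁ _ => Finset.sum_comm
    _ = ∑ S₁ : PBTdeg n₁, ∑ v₁ : PBTdeg n₁, ∑ v₂ : PBTdeg n₂, ∑ S₂ : PBTdeg n₂, _ :=
        Finset.sum_comm
    _ = ∑ S₁ : PBTdeg n₁, ∑ v₁ : PBTdeg n₁, ∑ S₂ : PBTdeg n₂, ∑ v₂ : PBTdeg n₂, _ :=
        Finset.sum_congr rfl fun S₁ _ => Finset.sum_congr rfl fun v₁ _ => Finset.sum_comm
    _ = ∑ S₁ : PBTdeg n₁, ∑ S₂ : PBTdeg n₂, ∑ v₁ : PBTdeg n₁, ∑ v₂ : PBTdeg n₂,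
          f S₁ * g S₂ *
            ((if tamari v₁.1 S₁.1 then (1:ℚ) else 0) * (if tamari v₂.1 S₂.1 then 1 else 0) *
              (if tamari (graftL v₁.1 v₂.1) W.1 ∧ tamari W.1 (graftR v₁.1 v₂.1) then 1 else 0)) :=
        Finset.sum_congr rfl fun S₁ _ => Finset.sum_comm
    _ = midL f g W := by
        refine Finset.sum_congr rfl fun S₁ _ => Finset.sum_congr rfl fun S₂ _ => ?_
        rw [show (∑ v₁ : PBTdeg n₁, ∑ v₂ : PBTdeg n₂,
          f S₁ * g S₂ *
            ((if tamari v₁.1 S₁.1 then (1:ℚ) else 0) * (if tamari v₂.1 S₂.1 then 1 else 0) *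
              (if tamari (graftL v₁.1 v₂.1) W.1 ∧ tamari W.1 (graftR v₁.1 v₂.1) then 1 else 0))) =
          f S₁ * g S₂ * ∑ v₁ : PBTdeg n₁, ∑ v₂ : PBTdeg n₂,
            ((if tamari v₁.1 S₁.1 then (1:ℚ) else 0) * (if tamari v₂.1 S₂.1 then 1 else 0) *
              (if tamari (graftL v₁.1 v₂.1) W.1 ∧ tamari W.1 (graftR v₁.1 v₂.1) then 1 else 0)) from by
            rw [Finset.mul_sum]
            exact Finset.sum_congr rfl fun v₁ _ => (Finset.mul_sum _ _ _).symm]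
        rw [countStar S₁.1 S₂.1 S₁.2 S₂.2 W]

end push2
section final

open PBT Classical

variable {n₁ n₂ : ℕ} [Fintype (PBTdeg n₁)] [Fintype (PBTdeg n₂)] [Fintype (PBTdeg (n₁ + n₂))]

theorem gprodR_delta (x y : PBT) (hx : x.deg = n₁) (hy : y.deg = n₂) :
    gprodR (delta n₁ x) (delta n₂ y) = delta (n₁ + n₂) (graftR x y) := by
  funext W
  show (∑ S₁ : PBTdeg n₁, ∑ S₂ : PBTdeg n₂, (if S₁.1 = x then (1:ℚ) else 0) *
      (if S₂.1 = y then 1 else 0) * (if W.1 = graftR S₁.1 S₂.1 then 1 else 0)) = _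
  rw [Finset.sum_eq_single (⟨x, hx⟩ : PBTdeg n₁)]
  · rw [Finset.sum_eq_single (⟨y, hy⟩ : PBTdeg n₂)]
    · show (if x = x then (1:ℚ) else 0) * (if y = y then (1:ℚ) else 0) * _ = _
      rw [if_pos rfl, if_pos rfl]
      show 1 * 1 * (if W.1 = graftR x y then (1:ℚ) else 0) = (if W.1 = graftR x y then (1:ℚ) else 0)
      rw [one_mul, one_mul]
    · intro s₂ _ hne
      rw [if_neg (fun he => hne (Subtype.ext he))]
      ring
    · intro h; exact absurd (Finset.mem_univ _) h
  · intro s₁ _ hne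
    apply Finset.sum_eq_zero
    intro s₂ _
    rw [if_neg (fun he => hne (Subtype.ext he))]
    ring
  · intro h; exact absurd (Finset.mem_univ _) h

theorem mvec_graftR (x y : PBT) (hx : x.deg = n₁) (hy : y.deg = n₂) :
    (((Lmat (n₁ + n₂)).transpose)⁻¹).mulVec (delta (n₁ + n₂) (graftR x y)) =
      gprodR ((((Lmat n₁).transpose)⁻¹).mulVec (delta n₁ x))
        ((((Lmat n₂).transpose)⁻¹).mulVec (delta n₂ y)) := by
  apply Nmat_mulVec_injective (n₁ + n₂)
  rw [Nmat_mulVec_inv, gprodR_push, Nmat_mulVec_inv, Nmat_mulVec_inv,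
    gprodR_delta x y hx hy]

theorem dprod_neg_neg (f : PBTdeg n₁ → ℚ) (g : PBTdeg n₂ → ℚ) :
    dprod (-f) (-g) = dprod f g := by
  funext W
  show (∑ S₁ : PBTdeg n₁, ∑ S₂ : PBTdeg n₂, (-f) S₁ * (-g) S₂ * _) = _
  refine Finset.sum_congr rfl fun S₁ _ => Finset.sum_congr rfl fun S₂ _ => ?_
  show (-f S₁) * (-g S₂) * _ = _
  ring


open PBT in
/-- `θ(T¹\T²) = -θ(T¹) * θ(T²)`, where `θ` is the Coxeter
transformation of the Tamari posets and `*` the (bilinearly extended)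
dendriform product. -/
theorem theta_graftR (n₁ n₂ : ℕ) [Fintype (PBTdeg n₁)] [Fintype (PBTdeg n₂)]
    [Fintype (PBTdeg (n₁ + n₂))] (T₁ T₂ : PBT) (h₁ : T₁.deg = n₁) (h₂ : T₂.deg = n₂) :
    (thetaMat (n₁ + n₂)).mulVec (delta (n₁ + n₂) (graftR T₁ T₂)) =
      -dprod ((thetaMat n₁).mulVec (delta n₁ T₁)) ((thetaMat n₂).mulVec (delta n₂ T₂)) := by
  have e1 : ∀ (n : ℕ) [Fintype (PBTdeg n)] (x : PBT),
      (thetaMat n).mulVec (delta n x) =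
        -((Lmat n).mulVec ((((Lmat n).transpose)⁻¹).mulVec (delta n x))) := by
    intro n _ x
    rw [thetaMat, Matrix.neg_mulVec, ← Matrix.mulVec_mulVec]
  rw [e1, e1, e1, dprod_neg_neg, mvec_graftR T₁ T₂ h₁ h₂, dprod_push]
end final
end
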